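/- Let Z be a uniform NROBP computing φ(G) for a graph G of matching width at least t. Then every root-leaf path of Z contains a t-node; i.e., the set of t-nodes forms a root-leaf cut of Z. -/

import Mathlib

open SimpleGraph

/-- There is a matching of size `t` in `G` all of whose edges have one end in `A` and the
other end outside `A`. -/
def HasCutMatching {V : Type} (G : SimpleGraph V) (A : Set V) (t : ℕ) : Prop :=
  ∃ a b : Fin t → V, Function.Injective a ∧ Function.Injective b ∧
    ∀ i, a i ∈ A ∧ b i ∉ A ∧ G.Adj (a i) (b i)

/-- The matching width of `G`: the minimum over all permutations (orderings) of `V(G)` of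
the maximum, over all prefixes, of the size of a largest matching consisting of edges
between the prefix and the rest of the vertices. -/
noncomputable def matchingWidth {V : Type} [Fintype V] (G : SimpleGraph V) : ℕ :=
  ⨅ σ : Fin (Fintype.card V) ≃ V, ⨆ i : Fin (Fintype.card V + 1),
    sSup {t | HasCutMatching G {v | ((σ.symm v : Fin (Fintype.card V)) : ℕ) < (i : ℕ)} t}

/-- A non-deterministic read-once branching program over variables `V`: a directed graph
(with possible multiple edges) with one root and one leaf, where some edges are labelled
by literals (a variable together with a sign). -/
structure NROBP (V : Type) where
  node : Type
  edge : Type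
  src : edge → node
  dst : edge → node
  label : edge → Option (V × Bool)
  root : node
  leaf : node

namespace NROBP

variable {V : Type}

/-- A directed path in the underlying graph of `Z`. -/
structure DiPath (Z : NROBP V) where
  len : ℕ
  verts : Fin (len + 1) → Z.node
  edges : Fin len → Z.edge
  srcOK : ∀ i : Fin len, Z.src (edges i) = verts i.castSucc
  dstOK : ∀ i : Fin len, Z.dst (edges i) = verts i.succ

variable {Z : NROBP V}

/-- The first vertex of a directed path. -/
def DiPath.start (P : Z.DiPath) : Z.node := P.verts 0

/-- The last vertex of a directed path. -/
def DiPath.finish (P : Z.DiPath) : Z.node := P.verts (Fin.last P.len)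

/-- The set `A(P)` of literals labelling the edges of a path `P`. -/
def DiPath.labels (P : Z.DiPath) : Set (V × Bool) :=
  {l | ∃ i : Fin P.len, Z.label (P.edges i) = some l}

/-- The set of variables whose literals label edges of `P`. -/
def DiPath.vars (P : Z.DiPath) : Set V := {v | ∃ b : Bool, (v, b) ∈ P.labels}

/-- `P` is a root-leaf path. -/
def DiPath.IsRootLeaf (P : Z.DiPath) : Prop := P.start = Z.root ∧ P.finish = Z.leaf

/-- `P` passes through the node `a`. -/
def DiPath.passes (P : Z.DiPath) (a : Z.node) : Prop := ∃ i, P.verts i = a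

/-- The set of variables occurring positively on `P`. -/
def posSet (Z : NROBP V) (P : Z.DiPath) : Set V := {v | (v, true) ∈ P.labels}

/-- `Z` is (syntactically) read-once: no directed path has two edges labelled with
literals of the same variable. -/
def ReadOnce (Z : NROBP V) : Prop :=
  ∀ P : Z.DiPath, ∀ i j : Fin P.len, ∀ (v : V) (b b' : Bool),
    Z.label (P.edges i) = some (v, b) → Z.label (P.edges j) = some (v, b') → i = j

/-- `Z` is acyclic (a DAG): no nontrivial directed path returns to its start. -/
def Acyclic (Z : NROBP V) : Prop :=
  ∀ P : Z.DiPath, 0 < P.len → P.start ≠ P.finish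

/-- `Z` is uniform: any two paths from the root to the same node read the same set of
variables, and every root-leaf path reads all the variables. -/
def Uniform (Z : NROBP V) : Prop :=
  (∀ P Q : Z.DiPath, P.start = Z.root → Q.start = Z.root → P.finish = Q.finish →
    P.vars = Q.vars) ∧
  (∀ P : Z.DiPath, P.IsRootLeaf → P.vars = Set.univ)

/-- `Z` computes the Boolean function (satisfaction predicate) `F`: the satisfying
assignments of `F` are exactly the total assignments extending the literal set `A(P)` of
some root-leaf path `P`. -/
def Computes (Z : NROBP V) (F : (V → Bool) → Prop) : Prop :=
  ∀ S : V → Bool,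
    F S ↔ ∃ P : Z.DiPath, P.IsRootLeaf ∧ ∀ (v : V) (b : Bool), (v, b) ∈ P.labels → S v = b

/-- `a` is a `t`-node of `Z`: there is a set `S(a)` of at least `t` variables contained
in `VC(P)` (the positively occurring variables) for every root-leaf path `P` through
`a`. -/
def IsTNode (Z : NROBP V) (t : ℕ) (a : Z.node) : Prop :=
  ∃ Sa : Set V, t ≤ Sa.ncard ∧
    ∀ P : Z.DiPath, P.IsRootLeaf → P.passes a → Sa ⊆ Z.posSet P

end NROBP

/-- A truth assignment `S` satisfies the monotone 2-CNF `φ(G)`, whose clauses are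
`(u ∨ v)` for the edges `{u,v}` of `G`. -/
def PhiSat {V : Type} (G : SimpleGraph V) (S : V → Bool) : Prop :=
  ∀ ⦃u v : V⦄, G.Adj u v → (S u = true ∨ S v = true)

namespace NROBP

variable {V : Type} {Z : NROBP V}

lemma DiPath.verts_congr (P : Z.DiPath) {i j : Fin (P.len + 1)} (h : (i : ℕ) = (j : ℕ)) :
    P.verts i = P.verts j := by congr 1; exact Fin.ext h

lemma DiPath.label_congr (P : Z.DiPath) {i j : Fin P.len} (h : (i : ℕ) = (j : ℕ)) :
    Z.label (P.edges i) = Z.label (P.edges j) := by rw [show i = j from Fin.ext h]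

def DiPath.take (P : Z.DiPath) (k : ℕ) (hk : k ≤ P.len) : Z.DiPath where
  len := k
  verts i := P.verts ⟨i.1, by omega⟩
  edges i := P.edges ⟨i.1, by omega⟩
  srcOK i := P.srcOK ⟨i.1, by omega⟩
  dstOK i := P.dstOK ⟨i.1, by omega⟩

def DiPath.drop (P : Z.DiPath) (k : ℕ) (hk : k ≤ P.len) : Z.DiPath where
  len := P.len - k
  verts i := P.verts ⟨k + i.1, by omega⟩
  edges i := P.edges ⟨k + i.1, by omega⟩
  srcOK i := P.srcOK ⟨k + i.1, by omega⟩
  dstOK i := P.dstOK ⟨k + i.1, by omega⟩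

@[simp] lemma DiPath.take_len (P : Z.DiPath) (k : ℕ) (hk : k ≤ P.len) :
    (P.take k hk).len = k := rfl

@[simp] lemma DiPath.drop_len (P : Z.DiPath) (k : ℕ) (hk : k ≤ P.len) :
    (P.drop k hk).len = P.len - k := rfl

lemma DiPath.take_start (P : Z.DiPath) (k : ℕ) (hk : k ≤ P.len) :
    (P.take k hk).start = P.start := P.verts_congr (by simp)

lemma DiPath.take_finish (P : Z.DiPath) (k : ℕ) (hk : k ≤ P.len) :
    (P.take k hk).finish = P.verts ⟨k, by omega⟩ := P.verts_congr (by simp [Fin.last])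

lemma DiPath.drop_start (P : Z.DiPath) (k : ℕ) (hk : k ≤ P.len) :
    (P.drop k hk).start = P.verts ⟨k, by omega⟩ := P.verts_congr (by simp)

lemma DiPath.drop_finish (P : Z.DiPath) (k : ℕ) (hk : k ≤ P.len) :
    (P.drop k hk).finish = P.finish := P.verts_congr (by simp [Fin.last]; omega)

lemma DiPath.take_labels (P : Z.DiPath) (k : ℕ) (hk : k ≤ P.len) :
    (P.take k hk).labels = {l | ∃ i : Fin P.len, (i : ℕ) < k ∧ Z.label (P.edges i) = some l} := by
  apply Set.Subset.antisymm
  · rintro l ⟨i, hi⟩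
    have hik : (i : ℕ) < k := i.2
    exact ⟨⟨i.1, by omega⟩, hik, hi⟩
  · rintro l ⟨i, h1, hi⟩
    exact ⟨⟨i.1, h1⟩, hi⟩

lemma DiPath.drop_labels (P : Z.DiPath) (k : ℕ) (hk : k ≤ P.len) :
    (P.drop k hk).labels = {l | ∃ i : Fin P.len, k ≤ (i : ℕ) ∧ Z.label (P.edges i) = some l} := by
  apply Set.Subset.antisymm
  · rintro l ⟨i, hi⟩
    have hik : (i : ℕ) < P.len - k := i.2
    exact ⟨⟨k + i.1, by omega⟩, Nat.le_add_right _ _, hi⟩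
  · rintro l ⟨i, h1, hi⟩
    refine ⟨⟨i.1 - k, by simp; try omega⟩, ?_⟩
    exact (P.label_congr (i := ⟨k + (i.1 - k), by omega⟩) (j := i) (by simp; try omega)).trans hi

lemma DiPath.take_labels_subset (P : Z.DiPath) (k : ℕ) (hk : k ≤ P.len) :
    (P.take k hk).labels ⊆ P.labels := by
  rw [P.take_labels k hk]; rintro l ⟨i, _, hi⟩; exact ⟨i, hi⟩

lemma DiPath.drop_labels_subset (P : Z.DiPath) (k : ℕ) (hk : k ≤ P.len) :
    (P.drop k hk).labels ⊆ P.labels := by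
  rw [P.drop_labels k hk]; rintro l ⟨i, _, hi⟩; exact ⟨i, hi⟩

lemma DiPath.labels_take_union_drop (P : Z.DiPath) (k : ℕ) (hk : k ≤ P.len) :
    P.labels = (P.take k hk).labels ∪ (P.drop k hk).labels := by
  rw [P.take_labels k hk, P.drop_labels k hk]
  apply Set.Subset.antisymm
  · rintro l ⟨i, hi⟩
    by_cases h : (i : ℕ) < k
    · exact Or.inl ⟨i, h, hi⟩
    · exact Or.inr ⟨i, by omega, hi⟩
  · rintro l (⟨i, _, hi⟩ | ⟨i, _, hi⟩) <;> exact ⟨i, hi⟩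

lemma vars_take_drop_disjoint (hRO : Z.ReadOnce) (P : Z.DiPath) (k : ℕ) (hk : k ≤ P.len)
    {v : V} (h1 : v ∈ (P.take k hk).vars) (h2 : v ∈ (P.drop k hk).vars) : False := by
  obtain ⟨b, hb⟩ := h1
  obtain ⟨b', hb'⟩ := h2
  rw [P.take_labels k hk] at hb
  rw [P.drop_labels k hk] at hb'
  obtain ⟨i, hik, hi⟩ := hb
  obtain ⟨j, hjk, hj⟩ := hb'
  have h := hRO P i j v b b' hi hj
  have h' := congrArg Fin.val h
  omega

lemma no_two_signs (hRO : Z.ReadOnce) (P : Z.DiPath) {v : V}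
    (h1 : (v, true) ∈ P.labels) (h2 : (v, false) ∈ P.labels) : False := by
  obtain ⟨i, hi⟩ := h1
  obtain ⟨j, hj⟩ := h2
  have h := hRO P i j v true false hi hj
  rw [h, hj] at hi
  simp at hi

def DiPath.append (P Q : Z.DiPath) (h : P.finish = Q.start) : Z.DiPath where
  len := P.len + Q.len
  verts i := if hi : i.1 ≤ P.len then P.verts ⟨i.1, by omega⟩
             else Q.verts ⟨i.1 - P.len, by omega⟩
  edges i := if hi : i.1 < P.len then P.edges ⟨i.1, hi⟩
             else Q.edges ⟨i.1 - P.len, by omega⟩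
  srcOK i := by
    by_cases hi : i.1 < P.len
    · rw [dif_pos hi, dif_pos (show ((i.castSucc : Fin (P.len + Q.len + 1)) : ℕ) ≤ P.len by simp; try omega)]
      exact P.srcOK ⟨i.1, hi⟩
    · rw [dif_neg hi]
      rw [Q.srcOK ⟨i.1 - P.len, by omega⟩]
      by_cases he : i.1 = P.len
      · rw [dif_pos (show ((i.castSucc : Fin (P.len + Q.len + 1)) : ℕ) ≤ P.len by simp; try omega)]
        have e1 : P.verts ⟨((i.castSucc : Fin (P.len + Q.len + 1)) : ℕ), by simp; try omega⟩ = P.finish :=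
          P.verts_congr (by simp [Fin.last]; omega)
        rw [e1, h]
        exact (Q.verts_congr (by simp; try omega)).symm
      · rw [dif_neg (show ¬ ((i.castSucc : Fin (P.len + Q.len + 1)) : ℕ) ≤ P.len by simp; try omega)]
        exact (Q.verts_congr (by simp; try omega)).symm
  dstOK i := by
    by_cases hi : i.1 < P.len
    · rw [dif_pos hi, dif_pos (show ((i.succ : Fin (P.len + Q.len + 1)) : ℕ) ≤ P.len by simp; try omega)]
      exact P.dstOK ⟨i.1, hi⟩
    · rw [dif_neg hi]
      rw [Q.dstOK ⟨i.1 - P.len, by omega⟩]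
      rw [dif_neg (show ¬ ((i.succ : Fin (P.len + Q.len + 1)) : ℕ) ≤ P.len by simp; try omega)]
      exact (Q.verts_congr (by simp; try omega)).symm

@[simp] lemma DiPath.append_len (P Q : Z.DiPath) (h : P.finish = Q.start) :
    (P.append Q h).len = P.len + Q.len := rfl

lemma DiPath.append_start (P Q : Z.DiPath) (h : P.finish = Q.start) :
    (P.append Q h).start = P.start := by
  show (P.append Q h).verts 0 = P.verts 0
  dsimp only [DiPath.append]
  rw [dif_pos (by simp)]
  exact P.verts_congr (by simp)

lemma DiPath.append_finish (P Q : Z.DiPath) (h : P.finish = Q.start) :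
    (P.append Q h).finish = Q.finish := by
  show (P.append Q h).verts (Fin.last _) = _
  dsimp only [DiPath.append]
  by_cases hq : Q.len = 0
  · rw [dif_pos (show ((Fin.last (P.len + Q.len)) : ℕ) ≤ P.len by simp [Fin.last]; omega)]
    have e1 : P.verts ⟨((Fin.last (P.len + Q.len)) : ℕ), by simp [Fin.last]; omega⟩ = P.finish :=
      P.verts_congr (by simp [Fin.last]; omega)
    rw [e1, h]
    exact Q.verts_congr (by simp [Fin.last]; omega)
  · rw [dif_neg (show ¬ ((Fin.last (P.len + Q.len)) : ℕ) ≤ P.len by simp [Fin.last]; omega)]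
    exact Q.verts_congr (by simp [Fin.last])

lemma DiPath.append_labels (P Q : Z.DiPath) (h : P.finish = Q.start) :
    (P.append Q h).labels = P.labels ∪ Q.labels := by
  apply Set.Subset.antisymm
  · rintro l ⟨i, hi⟩
    have hi2 : (i : ℕ) < P.len + Q.len := i.2
    dsimp only [DiPath.append] at hi
    by_cases hip : (i : ℕ) < P.len
    · rw [dif_pos hip] at hi
      exact Or.inl ⟨_, hi⟩
    · rw [dif_neg hip] at hi
      exact Or.inr ⟨_, hi⟩
  · rintro l (⟨i, hi⟩ | ⟨i, hi⟩)
    · refine ⟨⟨i.1, by simp; omega⟩, ?_⟩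
      show Z.label (dite _ _ _) = some l
      rw [dif_pos (show ((⟨i.1, by omega⟩ : Fin (P.len + Q.len)) : ℕ) < P.len from i.2)]
      exact hi
    · refine ⟨⟨P.len + i.1, by simp⟩, ?_⟩
      show Z.label (dite _ _ _) = some l
      rw [dif_neg (show ¬ ((⟨P.len + i.1, by simp⟩ : Fin (P.len + Q.len)) : ℕ) < P.len by simp)]
      exact (Q.label_congr (by simp)).trans hi


end NROBP

lemma hasCutMatching_zero {V : Type} (G : SimpleGraph V) (A : Set V) :
    HasCutMatching G A 0 :=
  ⟨Fin.elim0, Fin.elim0, fun i => i.elim0, fun i => i.elim0, fun i => i.elim0⟩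

lemma hasCutMatching_mono {V : Type} {G : SimpleGraph V} {A : Set V} {s t : ℕ}
    (h : HasCutMatching G A s) (hts : t ≤ s) : HasCutMatching G A t := by
  obtain ⟨a, b, ha, hb, hab⟩ := h
  refine ⟨fun i => a ⟨i.1, by omega⟩, fun i => b ⟨i.1, by omega⟩, ?_, ?_, ?_⟩
  · intro i j hij
    have := ha hij
    have := congrArg Fin.val this
    exact Fin.ext this
  · intro i j hij
    have := hb hij
    have := congrArg Fin.val this
    exact Fin.ext this
  · intro i
    exact hab ⟨i.1, by omega⟩

lemma hasCutMatching_le_card {V : Type} [Fintype V] {G : SimpleGraph V} {A : Set V} {s : ℕ}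
    (h : HasCutMatching G A s) : s ≤ Fintype.card V := by
  obtain ⟨a, _, ha, _, _⟩ := h
  simpa using Fintype.card_le_of_injective a ha

lemma exists_prefix_cut {V : Type} [Fintype V] (G : SimpleGraph V) (t : ℕ)
    (σ : Fin (Fintype.card V) ≃ V) (hmw : t ≤ matchingWidth G) :
    ∃ i : Fin (Fintype.card V + 1),
      HasCutMatching G {v | ((σ.symm v : Fin (Fintype.card V)) : ℕ) < (i : ℕ)} t := by
  set g : Fin (Fintype.card V + 1) → ℕ := fun i =>
    sSup {s | HasCutMatching G {v | ((σ.symm v : Fin (Fintype.card V)) : ℕ) < (i : ℕ)} s} with hg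
  have h1 : matchingWidth G ≤ ⨆ i, g i := Nat.sInf_le ⟨σ, rfl⟩
  have h2 : t ≤ ⨆ i, g i := hmw.trans h1
  have h3 : (⨆ i, g i) ∈ Set.range g :=
    Nat.sSup_mem (Set.range_nonempty g) (Set.finite_range g).bddAbove
  obtain ⟨i, hi⟩ := h3
  refine ⟨i, ?_⟩
  have h4 : t ≤ g i := by rw [hi]; exact h2
  have h5 : g i ∈ {s | HasCutMatching G {v | ((σ.symm v : Fin (Fintype.card V)) : ℕ) < (i : ℕ)} s} := by
    rw [hg]
    exact Nat.sSup_mem ⟨0, hasCutMatching_zero G _⟩ ⟨Fintype.card V, fun s hs => hasCutMatching_le_card hs⟩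
  exact hasCutMatching_mono h5 h4

/-- If `Z` is a uniform NROBP computing `φ(G)` for a graph `G` of matching width at least
`t`, then every root-leaf path of `Z` contains a `t`-node; i.e., the `t`-nodes form a
root-leaf cut of `Z`. -/
theorem tnodes_form_cut {V : Type} [Fintype V] (G : SimpleGraph V) (t : ℕ)
    (Z : NROBP V) (hRO : Z.ReadOnce) (hAc : Z.Acyclic) (hU : Z.Uniform)
    (hC : Z.Computes (PhiSat G)) (hmw : t ≤ matchingWidth G) :
    ∀ P : Z.DiPath, P.IsRootLeaf → ∃ a : Z.node, P.passes a ∧ Z.IsTNode t a := by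

  classical
  intro P hP
  have hvP : P.vars = Set.univ := hU.2 P hP
  have hex : ∀ v : V, ∃ p : Fin P.len × Bool, Z.label (P.edges p.1) = some (v, p.2) := by
    intro v
    have hv : v ∈ P.vars := hvP ▸ Set.mem_univ v
    obtain ⟨b, i, hi⟩ := hv
    exact ⟨(i, b), hi⟩
  choose fp hfp using hex
  set f : V → Fin P.len := fun v => (fp v).1 with hfdef
  have hfuniq : ∀ (v : V) (i : Fin P.len) (b : Bool),
      Z.label (P.edges i) = some (v, b) → i = f v :=
    fun v i b hi => hRO P i (f v) v b (fp v).2 hi (hfp v)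
  have hfinj : Function.Injective f := by
    intro u v huv
    have h3 : some (u, (fp u).2) = some (v, (fp v).2) := by
      rw [← hfp u, ← hfp v, show (fp u).1 = (fp v).1 from huv]
    simp only [Option.some_inj, Prod.mk.injEq] at h3
    exact h3.1
  letI : LinearOrder V := LinearOrder.lift' f hfinj
  set σ : Fin (Fintype.card V) ≃o V := monoEquivOfFin V rfl with hσdef
  obtain ⟨i, hcut⟩ := exists_prefix_cut G t σ.toEquiv hmw
  set A : Set V := {v | ((σ.toEquiv.symm v : Fin (Fintype.card V)) : ℕ) < (i : ℕ)} with hAdef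
  obtain ⟨am, bm, hainj, hbinj, hab⟩ := hcut
  have hdc : ∀ v w : V, v ∈ A → (f w : ℕ) ≤ (f v : ℕ) → w ∈ A := by
    intro v w hv hle
    have h1 : w ≤ v := by
      change f w ≤ f v
      exact hle
    have h2 : σ.symm w ≤ σ.symm v := σ.symm.monotone h1
    have h3 : ((σ.toEquiv.symm w : Fin (Fintype.card V)) : ℕ) ≤
        ((σ.toEquiv.symm v : Fin (Fintype.card V)) : ℕ) := h2
    exact lt_of_le_of_lt h3 hv
  obtain ⟨m, hmle, hmA⟩ : ∃ m : ℕ, m ≤ P.len ∧ ∀ v : V, ((f v : ℕ) < m ↔ v ∈ A) := by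
    refine ⟨Finset.univ.sup (fun v => if v ∈ A then (f v : ℕ) + 1 else 0), ?_, ?_⟩
    · apply Finset.sup_le
      intro v _
      split_ifs
      · exact (f v).2
      · omega
    · intro v
      constructor
      · intro hv
        obtain ⟨w, -, hw⟩ := Finset.lt_sup_iff.mp hv
        by_cases hwA : w ∈ A
        · rw [if_pos hwA] at hw
          exact hdc w v hwA (by omega)
        · rw [if_neg hwA] at hw; omega
      · intro hv
        have h1 : (if v ∈ A then (f v : ℕ) + 1 else 0) ≤
            Finset.univ.sup (fun v => if v ∈ A then (f v : ℕ) + 1 else 0) :=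
          Finset.le_sup (f := fun v => if v ∈ A then (f v : ℕ) + 1 else 0) (Finset.mem_univ v)
        rw [if_pos hv] at h1
        omega
  set c : Z.node := P.verts ⟨m, by omega⟩ with hcdef
  have hP1vars : (P.take m hmle).vars = A := by
    ext v
    simp only [NROBP.DiPath.vars, NROBP.DiPath.take_labels, Set.mem_setOf_eq]
    constructor
    · rintro ⟨b, j, hjm, hj⟩
      have he := hfuniq v j b hj
      have hval : (f v : ℕ) = (j : ℕ) := by rw [← he]
      rw [← hmA v]; omega
    · intro hv
      rw [← hmA v] at hv
      exact ⟨(fp v).2, f v, hv, hfp v⟩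
  have hP1finish : (P.take m hmle).finish = c := by
    rw [P.take_finish]
  have hsplit : ∀ Q : Z.DiPath, Q.IsRootLeaf → Q.passes c →
      ∃ Q1 Q2 : Z.DiPath, Q1.start = Z.root ∧ Q1.finish = c ∧ Q2.start = c ∧
        Q2.finish = Z.leaf ∧ Q1.vars = A ∧ Q1.labels ⊆ Q.labels ∧ Q2.labels ⊆ Q.labels ∧
        (∀ v : V, v ∈ Q1.vars → v ∈ Q2.vars → False) := by
    rintro Q ⟨hQs, hQf⟩ ⟨k, hk⟩
    have hkle : (k : ℕ) ≤ Q.len := by omega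
    have hQ1f : (Q.take k.1 hkle).finish = c := by
      rw [Q.take_finish, ← hk]
    have hQ1s : (Q.take k.1 hkle).start = Z.root := by rw [Q.take_start]; exact hQs
    refine ⟨Q.take k.1 hkle, Q.drop k.1 hkle, hQ1s, hQ1f, ?_, ?_, ?_,
      Q.take_labels_subset _ _, Q.drop_labels_subset _ _,
      fun v => NROBP.vars_take_drop_disjoint hRO Q k.1 hkle⟩
    · rw [Q.drop_start, ← hk]
    · rw [Q.drop_finish]; exact hQf
    · have hvv := hU.1 (Q.take k.1 hkle) (P.take m hmle) hQ1s
        (by rw [P.take_start]; exact hP.1) (by rw [hQ1f, hP1finish])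
      rw [hvv, hP1vars]
  have hcover : ∀ R1 R2 : Z.DiPath, R1.start = Z.root → R1.finish = c → R2.start = c →
      R2.finish = Z.leaf → ∀ u w : V, G.Adj u w →
      ((u, true) ∈ R1.labels ∪ R2.labels ∨ (w, true) ∈ R1.labels ∪ R2.labels) := by
    intro R1 R2 h1 h2 h3 h4 u w hadj
    have hH : R1.finish = R2.start := h2.trans h3.symm
    set H := R1.append R2 hH with hHdef
    have hHlab : H.labels = R1.labels ∪ R2.labels := R1.append_labels R2 hH
    have hHrl : H.IsRootLeaf := by
      constructor
      · rw [hHdef, R1.append_start]; exact h1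
      · rw [hHdef, R1.append_finish]; exact h4
    set S : V → Bool := fun v => if (v, true) ∈ H.labels then true else false with hSdef
    have hphi : PhiSat G S := by
      rw [hC S]
      refine ⟨H, hHrl, ?_⟩
      intro v bb hvb
      cases bb
      · simp only [hSdef]
        rw [if_neg]
        intro hmem
        exact NROBP.no_two_signs hRO H hmem hvb
      · simp only [hSdef]
        rw [if_pos hvb]
    rcases hphi hadj with h | h
    · left; rw [← hHlab]
      by_contra hn
      simp only [hSdef, if_neg hn] at h
      exact Bool.false_ne_true h
    · right; rw [← hHlab]
      by_contra hn
      simp only [hSdef, if_neg hn] at h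
      exact Bool.false_ne_true h
  have hpassP : P.passes c := ⟨⟨m, by omega⟩, rfl⟩
  set pick : Fin t → V := fun j =>
    if (∀ Q : Z.DiPath, Q.IsRootLeaf → Q.passes c → am j ∈ Z.posSet Q) then am j else bm j
    with hpickdef
  have hpickmem : ∀ (j : Fin t) (Q : Z.DiPath), Q.IsRootLeaf → Q.passes c →
      pick j ∈ Z.posSet Q := by
    intro j Q hQ hp
    by_cases hj : ∀ Q : Z.DiPath, Q.IsRootLeaf → Q.passes c → am j ∈ Z.posSet Q
    · simp only [hpickdef]
      rw [if_pos hj]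
      exact hj Q hQ hp
    · simp only [hpickdef]
      rw [if_neg hj]
      push_neg at hj
      obtain ⟨Q0, hQ0rl, hQ0p, hQ0a⟩ := hj
      obtain ⟨Q01, Q02, hs1, hf1, hs2, hf2, hv1, hsub1, hsub2, hdisj⟩ := hsplit Q0 hQ0rl hQ0p
      have haA : am j ∈ A := (hab j).1
      have haV : am j ∈ Q01.vars := by rw [hv1]; exact haA
      obtain ⟨s, hs⟩ := haV
      have hsf : s = false := by
        cases s
        · rfl
        · exact absurd (hsub1 hs) hQ0a
      rw [hsf] at hs
      obtain ⟨R1, R2, hrs1, hrf1, hrs2, hrf2, hrv1, hrsub1, hrsub2, hrdisj⟩ := hsplit Q hQ hp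
      rcases hcover Q01 R2 hs1 hf1 hrs2 hrf2 (am j) (bm j) (hab j).2.2 with h | h
      · exfalso
        rcases h with h | h
        · exact NROBP.no_two_signs hRO Q01 h hs
        · exact hrdisj (am j) (by rw [hrv1]; exact haA) ⟨true, h⟩
      · rcases h with h | h
        · have hbA : bm j ∈ A := by rw [← hv1]; exact ⟨true, h⟩
          exact absurd hbA (hab j).2.1
        · exact hrsub2 h
  have hpickinj : Function.Injective pick := by
    intro j j' he
    simp only [hpickdef] at he
    split_ifs at he with h1 h2 h2
    · exact hainj he
    · exfalso
      have hmem := (hab j).1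
      rw [he] at hmem
      exact (hab j').2.1 hmem
    · exfalso
      have hmem := (hab j').1
      rw [← he] at hmem
      exact (hab j).2.1 hmem
    · exact hbinj he
  refine ⟨c, hpassP, Set.range pick, ?_, ?_⟩
  · rw [← Nat.card_coe_set_eq, Nat.card_range_of_injective hpickinj,
      Nat.card_eq_fintype_card, Fintype.card_fin]
  · rintro Q hQ hp v ⟨j, rfl⟩
    exact hpickmem j Q hQ hp
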